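/- The number of punctured link patterns on 2n points (non-crossing pairings of 2n cyclically ordered points on the boundary of a punctured disk, where each arc is additionally distinguished by whether it passes left or right of the puncture) equals (n+1)·C_n, where C_n is the n-th Catalan number. -/

import Mathlib

/-- A link pattern on `2n` points: a fixed-point-free non-crossing involution of `Fin (2n)`. -/
def IsLinkPattern (n : ℕ) (f : Fin (2 * n) → Fin (2 * n)) : Prop :=
  Function.Involutive f ∧ (∀ i, f i ≠ i) ∧
    ∀ i j : Fin (2 * n),
      ¬ ((i : ℕ) < (j : ℕ) ∧ (j : ℕ) < (f i : ℕ) ∧ (f i : ℕ) < (f j : ℕ))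

/-- A punctured link pattern on `2n` points: a non-crossing perfect matching `f`
together with the datum of the position of the puncture, encoded by the innermost
arc enclosing the puncture (`some i` with `i` the smaller endpoint of that arc,
i.e. `i < f i`), or `none` if no arc encloses the puncture (the puncture sits in
the outer region next to the boundary).  This is exactly the extra datum
distinguishing, among the nested arcs, which ones pass left or right of the
puncture. -/
def IsPuncturedLinkPattern (n : ℕ)
    (p : (Fin (2 * n) → Fin (2 * n)) × Option (Fin (2 * n))) : Prop :=
  IsLinkPattern n p.1 ∧ ∀ i, p.2 = some i → (i : ℕ) < (p.1 i : ℕ)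

open List DyckStep

namespace PLPaux

/-! ### Heights and discrete IVT -/

/-- Height of the lattice path after `m` steps. -/
def ht (l : List DyckStep) (m : ℕ) : ℤ :=
  ((l.take m).count U : ℤ) - ((l.take m).count D : ℤ)

lemma ht_zero (l : List DyckStep) : ht l 0 = 0 := by simp [ht]

lemma ht_succ (l : List DyckStep) (m : ℕ) (h : m < l.length) :
    ht l (m + 1) = ht l m + (if l.get ⟨m, h⟩ = U then 1 else -1) := by
  have ht' : l.take (m+1) = l.take m ++ [l.get ⟨m, h⟩] := by
    rw [List.take_succ]; simp [List.getElem?_eq_getElem h]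
  rw [ht, ht, ht', count_append, count_append]
  rcases (l.get ⟨m, h⟩).dichotomy with h' | h' <;>
    rw [h'] <;> simp <;> ring

lemma ht_stop (l : List DyckStep) (m : ℕ) (h : l.length ≤ m) : ht l m = ht l l.length := by
  unfold ht
  rw [List.take_of_length_le h, List.take_of_length_le le_rfl]

lemma ht_succ_le (l : List DyckStep) (m : ℕ) : ht l (m + 1) ≤ ht l m + 1 := by
  rcases lt_or_ge m l.length with h | h
  · rw [ht_succ l m h]; split <;> omega
  · rw [ht_stop l (m+1) (by omega), ht_stop l m h]; omega

lemma ht_succ_ge (l : List DyckStep) (m : ℕ) : ht l m - 1 ≤ ht l (m + 1) := by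
  rcases lt_or_ge m l.length with h | h
  · rw [ht_succ l m h]; split <;> omega
  · rw [ht_stop l (m+1) (by omega), ht_stop l m h]; omega

/-- Discrete IVT, downward crossings. -/
lemma ivt_down (g : ℕ → ℤ) (hstep : ∀ k, g k - 1 ≤ g (k + 1)) {a b : ℕ} {v : ℤ}
    (hab : a ≤ b) (hv : g b ≤ v) (hv' : v < g a) : ∃ m, a < m ∧ m ≤ b ∧ g m = v := by
  have hab' : a < b := lt_of_le_of_ne hab (by rintro rfl; omega)
  have hex : ∃ m, a < m ∧ m ≤ b ∧ g m ≤ v := ⟨b, hab', le_rfl, hv⟩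
  classical
  obtain ⟨ha1, ha2, ha3⟩ := Nat.find_spec hex
  refine ⟨Nat.find hex, ha1, ha2, le_antisymm ha3 ?_⟩
  obtain ⟨m', hmeq⟩ : ∃ m', Nat.find hex = m' + 1 := ⟨Nat.find hex - 1, by omega⟩
  rw [hmeq] at ha1 ha2 ha3 ⊢
  rcases eq_or_lt_of_le (Nat.succ_le_of_lt ha1 : a + 1 ≤ m' + 1) with heq | hlt
  · have h2 : a = m' := by omega
    have h1 : g m' - 1 ≤ g (m' + 1) := hstep m'
    rw [h2] at hv'; omega
  · have hm' : ¬ (a < m' ∧ m' ≤ b ∧ g m' ≤ v) := Nat.find_min hex (by omega)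
    have h1 : v < g m' := by by_contra hc; exact hm' ⟨by omega, by omega, by omega⟩
    have := hstep m'
    omega

/-- Discrete IVT, upward crossings. -/
lemma ivt_up (g : ℕ → ℤ) (hstep : ∀ k, g (k + 1) ≤ g k + 1) {a b : ℕ} {v : ℤ}
    (hab : a ≤ b) (hv : g a ≤ v) (hv' : v < g b) : ∃ m, a ≤ m ∧ m < b ∧ g m = v := by
  have hex : ∃ m, a ≤ m ∧ m ≤ b ∧ v < g m := ⟨b, hab, le_rfl, hv'⟩
  classical
  obtain ⟨ha1, ha2, ha3⟩ := Nat.find_spec hex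
  have hma : a < Nat.find hex := by
    rcases eq_or_lt_of_le ha1 with heq | h
    · exfalso; rw [← heq] at ha3; omega
    · exact h
  obtain ⟨m', hmeq⟩ : ∃ m', Nat.find hex = m' + 1 := ⟨Nat.find hex - 1, by omega⟩
  rw [hmeq] at ha1 ha2 ha3 hma
  have hm' : ¬ (a ≤ m' ∧ m' ≤ b ∧ v < g m') := Nat.find_min hex (by omega)
  have h1 : g m' ≤ v := by by_contra hc; exact hm' ⟨by omega, by omega, by omega⟩
  have := hstep m'
  exact ⟨m', by omega, by omega, by omega⟩

/-! ### Counting prefixes of `ofFn` words -/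

lemma count_eq_sum_ind (a : DyckStep) (l : List DyckStep) :
    l.count a = (l.map fun x => if x = a then (1:ℕ) else 0).sum := by
  induction l with
  | nil => simp
  | cons x xs ih => by_cases h : x = a <;> simp [List.count_cons, h, ih, Nat.add_comm]

lemma count_take_ofFn {N : ℕ} (g : Fin N → DyckStep) (a : DyckStep) (m : ℕ) :
    ((List.ofFn g).take m).count a
      = (Finset.univ.filter fun i : Fin N => (i : ℕ) < m ∧ g i = a).card := by
  rw [count_eq_sum_ind, List.map_take, List.map_ofFn]
  rw [List.sum_take_ofFn]
  rw [Finset.card_filter]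
  rw [Finset.sum_filter]
  congr 1
  ext i
  by_cases h1 : (i : ℕ) < m <;> by_cases h2 : g i = a <;> simp [h1, h2, Function.comp]

/-! ### The word of a link pattern -/

def wordOf (n : ℕ) (f : Fin (2 * n) → Fin (2 * n)) : List DyckStep :=
  List.ofFn fun i => if (i : ℕ) < (f i : ℕ) then U else D

variable {n : ℕ} {f : Fin (2 * n) → Fin (2 * n)}

lemma length_wordOf : (wordOf n f).length = 2 * n := by simp [wordOf]

lemma count_take_wordOf_U (m : ℕ) :
    ((wordOf n f).take m).count U
      = (Finset.univ.filter fun i : Fin (2 * n) => (i : ℕ) < m ∧ (i : ℕ) < (f i : ℕ)).card := by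
  rw [wordOf, count_take_ofFn]
  congr 1
  apply Finset.filter_congr
  intro i _
  by_cases h : (i : ℕ) < (f i : ℕ) <;> simp [h]

lemma count_take_wordOf_D (m : ℕ) :
    ((wordOf n f).take m).count D
      = (Finset.univ.filter fun i : Fin (2 * n) => (i : ℕ) < m ∧ ¬ (i : ℕ) < (f i : ℕ)).card := by
  rw [wordOf, count_take_ofFn]
  congr 1
  apply Finset.filter_congr
  intro i _
  by_cases h : (i : ℕ) < (f i : ℕ) <;> simp [h]

lemma ht_wordOf (m : ℕ) :
    ht (wordOf n f) m
      = ((Finset.univ.filter fun i : Fin (2 * n) => (i : ℕ) < m ∧ (i : ℕ) < (f i : ℕ)).card : ℤ)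
        - ((Finset.univ.filter fun i : Fin (2 * n) =>
            (i : ℕ) < m ∧ ¬ (i : ℕ) < (f i : ℕ)).card : ℤ) := by
  rw [ht, count_take_wordOf_U, count_take_wordOf_D]

section Involutive

variable (hinv : Function.Involutive f) (hfpf : ∀ i, f i ≠ i)
include hinv hfpf

omit hinv in
lemma not_lt_iff {i : Fin (2 * n)} : ¬ (i : ℕ) < (f i : ℕ) ↔ (f i : ℕ) < (i : ℕ) := by
  have : (f i : ℕ) ≠ (i : ℕ) := fun h => hfpf i (Fin.ext h)
  omega

/-- prefix inequality: closers inject into openers -/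
lemma closers_le_openers (m : ℕ) :
    (Finset.univ.filter fun i : Fin (2 * n) => (i : ℕ) < m ∧ ¬ (i : ℕ) < (f i : ℕ)).card
      ≤ (Finset.univ.filter fun i : Fin (2 * n) => (i : ℕ) < m ∧ (i : ℕ) < (f i : ℕ)).card := by
  apply Finset.card_le_card_of_injOn f
  · intro i hi
    simp only [Finset.mem_coe, Finset.mem_filter, Finset.mem_univ, true_and] at hi ⊢
    rw [not_lt_iff hfpf] at hi
    refine ⟨by omega, ?_⟩
    rw [hinv i]
    omega
  · intro a _ b _ hab
    exact hinv.injective hab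

lemma card_openers_eq_closers :
    (Finset.univ.filter fun i : Fin (2 * n) => (i : ℕ) < (f i : ℕ)).card
      = (Finset.univ.filter fun i : Fin (2 * n) => ¬ (i : ℕ) < (f i : ℕ)).card := by
  apply Finset.card_bij' (fun i _ => f i) (fun i _ => f i)
  · intro i hi
    simp only [Finset.mem_filter, Finset.mem_univ, true_and] at hi ⊢
    rw [not_lt_iff hfpf, hinv i]
    omega
  · intro i hi
    simp only [Finset.mem_filter, Finset.mem_univ, true_and] at hi ⊢
    rw [not_lt_iff hfpf] at hi
    rw [hinv i]
    omega
  · intro i _; exact hinv i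
  · intro i _; exact hinv i

lemma card_openers :
    (Finset.univ.filter fun i : Fin (2 * n) => (i : ℕ) < (f i : ℕ)).card = n := by
  have h1 := card_openers_eq_closers hinv hfpf
  have h2 : (Finset.univ.filter fun i : Fin (2 * n) => (i : ℕ) < (f i : ℕ)).card
      + (Finset.univ.filter fun i : Fin (2 * n) => ¬ (i : ℕ) < (f i : ℕ)).card
      = 2 * n := by
    rw [Finset.card_filter_add_card_filter_not
      (p := fun i : Fin (2 * n) => (i : ℕ) < (f i : ℕ))]
    simp
  omega

lemma count_U_wordOf : (wordOf n f).count U = n := by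
  have h1 : (wordOf n f).take (2 * n) = wordOf n f :=
    List.take_of_length_le (le_of_eq length_wordOf)
  have hU := count_take_wordOf_U (n := n) (f := f) (2 * n)
  rw [h1] at hU
  rw [hU]
  have he : (Finset.univ.filter fun i : Fin (2 * n) => (i : ℕ) < 2 * n ∧ (i : ℕ) < (f i : ℕ))
      = Finset.univ.filter fun i : Fin (2 * n) => (i : ℕ) < (f i : ℕ) := by
    apply Finset.filter_congr
    intro i _
    simp [i.isLt]
  rw [he, card_openers hinv hfpf]

/-- `wordOf f` is a Dyck word. -/
def dyckOf : DyckWord where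
  toList := wordOf n f
  count_U_eq_count_D := by
    have h1 : (wordOf n f).take (2 * n) = wordOf n f :=
      List.take_of_length_le (le_of_eq length_wordOf)
    have hU := count_take_wordOf_U (n := n) (f := f) (2 * n)
    have hD := count_take_wordOf_D (n := n) (f := f) (2 * n)
    rw [h1] at hU hD
    have he : ∀ (P : Fin (2 * n) → Prop) (_ : DecidablePred P),
        (Finset.univ.filter fun i : Fin (2 * n) => (i : ℕ) < 2 * n ∧ P i)
          = Finset.univ.filter P := by
      intro P _
      apply Finset.filter_congr
      intro i _
      simp [i.isLt]
    rw [hU, hD, he _ _, he _ _, card_openers_eq_closers hinv hfpf]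
  count_D_le_count_U i := by
    rw [count_take_wordOf_U, count_take_wordOf_D]
    exact closers_le_openers hinv hfpf i

end Involutive

/-! ### The matched-pair relation -/

/-- `Rel l i j` : positions `i` and `j` are a matched `U`–`D` pair in `l`. -/
def Rel (l : List DyckStep) (i j : ℕ) : Prop :=
  i < j ∧ ht l (j + 1) = ht l i ∧ ∀ m, i < m → m ≤ j → ht l i < ht l m

lemma Rel.unique_right {l : List DyckStep} {i j j' : ℕ} (h : Rel l i j) (h' : Rel l i j') :
    j = j' := by
  by_contra hne
  rcases Nat.lt_or_ge j j' with hlt | hge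
  · have hij := h.1
    have := h'.2.2 (j + 1) (by omega) (by omega)
    rw [h.2.1] at this
    omega
  · have hlt : j' < j := by omega
    have hij := h'.1
    have := h.2.2 (j' + 1) (by omega) (by omega)
    rw [h'.2.1] at this
    omega

lemma Rel.unique_left {l : List DyckStep} {i i' j : ℕ} (h : Rel l i j) (h' : Rel l i' j) :
    i = i' := by
  by_contra hne
  rcases Nat.lt_or_ge i i' with hlt | hge
  · have h1 := h.2.2 i' hlt (le_of_lt h'.1)
    rw [← h.2.1, h'.2.1] at h1
    omega
  · have hlt : i' < i := by omega
    have h1 := h'.2.2 i hlt (le_of_lt h.1)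
    rw [← h'.2.1, h.2.1] at h1
    omega

lemma Rel.get_U {l : List DyckStep} {i j : ℕ} (h : Rel l i j) (hj : j < l.length) :
    l.get ⟨i, lt_trans h.1 hj⟩ = U := by
  have h1 := h.2.2 (i + 1) (by omega) h.1
  have h2 := ht_succ l i (lt_trans h.1 hj)
  rcases (l.get ⟨i, lt_trans h.1 hj⟩).dichotomy with h' | h'
  · exact h'
  · rw [h', if_neg (by simp)] at h2
    omega

lemma Rel.get_D {l : List DyckStep} {i j : ℕ} (h : Rel l i j) (hj : j < l.length) :
    l.get ⟨j, hj⟩ = D := by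
  have h1 := h.2.2 j h.1 le_rfl
  have h2 := ht_succ l j hj
  have h3 := h.2.1
  rcases (l.get ⟨j, hj⟩).dichotomy with h' | h'
  · rw [h', if_pos rfl] at h2
    omega
  · exact h'

/-! ### Link patterns satisfy `Rel` -/

section LP

variable (hlp : IsLinkPattern n f)
include hlp

/-- The interval under an arc is invariant. -/
lemma arc_invariant {a k : Fin (2 * n)} (ha : (a : ℕ) < (f a : ℕ))
    (h1 : (a : ℕ) < (k : ℕ)) (h2 : (k : ℕ) < (f a : ℕ)) :
    (a : ℕ) < (f k : ℕ) ∧ (f k : ℕ) < (f a : ℕ) := by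
  obtain ⟨hinv, hfpf, hnc⟩ := hlp
  have hne1 : f k ≠ f a := fun h => by
    have := hinv.injective h
    subst this
    omega
  have hne2 : f k ≠ a := fun h => by
    have : f (f k) = f a := by rw [h]
    rw [hinv k] at this
    subst this
    omega
  have hlt1 : (f k : ℕ) < (f a : ℕ) := by
    rcases Nat.lt_or_ge (f k : ℕ) (f a : ℕ) with h | h
    · exact h
    · exfalso
      have : (f k : ℕ) ≠ (f a : ℕ) := fun hh => hne1 (Fin.ext hh)
      exact hnc a k ⟨h1, h2, by omega⟩
  refine ⟨?_, hlt1⟩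
  rcases Nat.lt_or_ge (a : ℕ) (f k : ℕ) with h | h
  · exact h
  · exfalso
    have hne : (f k : ℕ) ≠ (a : ℕ) := fun hh => hne2 (Fin.ext hh)
    refine hnc (f k) a ⟨by omega, ?_, ?_⟩
    · rw [hinv k]; omega
    · rw [hinv k]; omega

omit hlp in
lemma ht_wordOf_sub {a m : ℕ} (ham : a ≤ m) :
    ht (wordOf n f) m - ht (wordOf n f) a
      = ((Finset.univ.filter fun i : Fin (2 * n) =>
            a ≤ (i : ℕ) ∧ (i : ℕ) < m ∧ (i : ℕ) < (f i : ℕ)).card : ℤ)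
        - ((Finset.univ.filter fun i : Fin (2 * n) =>
            a ≤ (i : ℕ) ∧ (i : ℕ) < m ∧ ¬ (i : ℕ) < (f i : ℕ)).card : ℤ) := by
  have hsplit : ∀ (P : Fin (2 * n) → Prop) (_ : DecidablePred P),
      (Finset.univ.filter fun i : Fin (2 * n) => (i : ℕ) < m ∧ P i).card
        = (Finset.univ.filter fun i : Fin (2 * n) => (i : ℕ) < a ∧ P i).card
          + (Finset.univ.filter fun i : Fin (2 * n) =>
              a ≤ (i : ℕ) ∧ (i : ℕ) < m ∧ P i).card := by
    intro P _
    rw [← Finset.card_union_of_disjoint]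
    · congr 1
      ext i
      simp only [Finset.mem_union, Finset.mem_filter, Finset.mem_univ, true_and]
      constructor
      · rintro ⟨h1, h2⟩
        rcases Nat.lt_or_ge (i : ℕ) a with h | h
        · exact Or.inl ⟨h, h2⟩
        · exact Or.inr ⟨h, h1, h2⟩
      · rintro (⟨h1, h2⟩ | ⟨h1, h2, h3⟩)
        · exact ⟨by omega, h2⟩
        · exact ⟨h2, h3⟩
    · rw [Finset.disjoint_left]
      intro i hi hi'
      simp only [Finset.mem_filter, Finset.mem_univ, true_and] at hi hi'
      omega
  rw [ht_wordOf, ht_wordOf, hsplit _ _, hsplit _ _]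
  push_cast
  ring

lemma ht_wordOf_arc {a : Fin (2 * n)} (ha : (a : ℕ) < (f a : ℕ)) :
    ht (wordOf n f) ((f a : ℕ) + 1) = ht (wordOf n f) a := by
  obtain ⟨hinv, hfpf, -⟩ := id hlp
  have hsub := ht_wordOf_sub (n := n) (f := f) (a := (a : ℕ)) (m := (f a : ℕ) + 1) (by omega)
  have hcard :
      (Finset.univ.filter fun i : Fin (2 * n) =>
          (a : ℕ) ≤ (i : ℕ) ∧ (i : ℕ) < (f a : ℕ) + 1 ∧ (i : ℕ) < (f i : ℕ)).card
        = (Finset.univ.filter fun i : Fin (2 * n) =>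
            (a : ℕ) ≤ (i : ℕ) ∧ (i : ℕ) < (f a : ℕ) + 1 ∧ ¬ (i : ℕ) < (f i : ℕ)).card := by
    apply Finset.card_bij' (fun i _ => f i) (fun i _ => f i)
    · intro i hi
      simp only [Finset.mem_filter, Finset.mem_univ, true_and] at hi ⊢
      obtain ⟨hi1, hi2, hi3⟩ := hi
      rcases eq_or_lt_of_le hi1 with heq | hlt
      · have : i = a := Fin.ext heq.symm
        subst this
        rw [not_lt_iff hfpf, hinv i]
        omega
      · have hik : (i : ℕ) < (f a : ℕ) := by
          rcases Nat.lt_or_ge (i : ℕ) (f a : ℕ) with h | h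
          · exact h
          · exfalso
            have : i = f a := Fin.ext (by omega)
            subst this
            rw [hinv] at hi3
            omega
        obtain ⟨hk1, hk2⟩ := arc_invariant hlp ha hlt hik
        rw [not_lt_iff hfpf, hinv i]
        omega
    · intro i hi
      simp only [Finset.mem_filter, Finset.mem_univ, true_and] at hi ⊢
      obtain ⟨hi1, hi2, hi3⟩ := hi
      rw [not_lt_iff hfpf] at hi3
      have hia : (a : ℕ) < (i : ℕ) := by
        rcases eq_or_lt_of_le hi1 with heq | hlt
        · exfalso
          have : i = a := Fin.ext heq.symm
          subst this
          omega
        · exact hlt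
      rcases Nat.lt_or_ge (i : ℕ) (f a : ℕ) with h | h
      · obtain ⟨hk1, hk2⟩ := arc_invariant hlp ha hia h
        rw [hinv i]
        omega
      · have : i = f a := Fin.ext (by omega)
        subst this
        rw [hinv]
        omega
    · intro i _; exact hinv i
    · intro i _; exact hinv i
  rw [hcard] at hsub
  omega

lemma ht_wordOf_strict {a : Fin (2 * n)} (ha : (a : ℕ) < (f a : ℕ)) {m : ℕ}
    (h1 : (a : ℕ) < m) (h2 : m ≤ (f a : ℕ)) :
    ht (wordOf n f) a < ht (wordOf n f) m := by
  obtain ⟨hinv, hfpf, -⟩ := id hlp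
  have hsub := ht_wordOf_sub (n := n) (f := f) (a := (a : ℕ)) (m := m) (le_of_lt h1)
  have hmem : a ∈ Finset.univ.filter fun i : Fin (2 * n) =>
      (a : ℕ) ≤ (i : ℕ) ∧ (i : ℕ) < m ∧ (i : ℕ) < (f i : ℕ) := by
    simp only [Finset.mem_filter, Finset.mem_univ, true_and]
    exact ⟨le_rfl, h1, ha⟩
  have hinj :
      (Finset.univ.filter fun i : Fin (2 * n) =>
          (a : ℕ) ≤ (i : ℕ) ∧ (i : ℕ) < m ∧ ¬ (i : ℕ) < (f i : ℕ)).card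
        ≤ ((Finset.univ.filter fun i : Fin (2 * n) =>
            (a : ℕ) ≤ (i : ℕ) ∧ (i : ℕ) < m ∧ (i : ℕ) < (f i : ℕ)).erase a).card := by
    apply Finset.card_le_card_of_injOn f
    · intro i hi
      simp only [Finset.mem_coe, Finset.mem_filter, Finset.mem_univ, true_and] at hi
      obtain ⟨hi1, hi2, hi3⟩ := hi
      rw [not_lt_iff hfpf] at hi3
      have hia : (a : ℕ) < (i : ℕ) := by
        rcases eq_or_lt_of_le hi1 with heq | hlt
        · exfalso
          have : i = a := Fin.ext heq.symm
          subst this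
          omega
        · exact hlt
      obtain ⟨hk1, hk2⟩ := arc_invariant hlp ha hia (by omega)
      rw [Finset.mem_coe, Finset.mem_erase]
      constructor
      · intro h
        rw [h] at hk1
        omega
      · simp only [Finset.mem_filter, Finset.mem_univ, true_and]
        rw [hinv i]
        omega
    · intro x _ y _ hxy
      exact hinv.injective hxy
  rw [Finset.card_erase_of_mem hmem] at hinj
  have hpos : 0 < (Finset.univ.filter fun i : Fin (2 * n) =>
      (a : ℕ) ≤ (i : ℕ) ∧ (i : ℕ) < m ∧ (i : ℕ) < (f i : ℕ)).card :=
    Finset.card_pos.mpr ⟨a, hmem⟩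
  omega

lemma rel_of_lp {a : Fin (2 * n)} (ha : (a : ℕ) < (f a : ℕ)) :
    Rel (wordOf n f) (a : ℕ) ((f a : ℕ)) :=
  ⟨ha, ht_wordOf_arc hlp ha, fun m h1 h2 => ht_wordOf_strict hlp ha h1 h2⟩

omit hlp in
lemma wordOf_injective {g : Fin (2 * n) → Fin (2 * n)} (hf : IsLinkPattern n f)
    (hg : IsLinkPattern n g) (h : wordOf n f = wordOf n g) : f = g := by
  have hfun : ∀ i : Fin (2 * n), ((i : ℕ) < (f i : ℕ) ↔ (i : ℕ) < (g i : ℕ)) := by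
    intro i
    have := congrFun (List.ofFn_inj.mp h) i
    by_cases h1 : (i : ℕ) < (f i : ℕ) <;> by_cases h2 : (i : ℕ) < (g i : ℕ) <;>
      simp [h1, h2] at this ⊢
  have key : ∀ i : Fin (2 * n), (i : ℕ) < (f i : ℕ) → f i = g i := by
    intro i hi
    have r1 := rel_of_lp hf hi
    have r2 := rel_of_lp hg ((hfun i).mp hi)
    rw [h] at r1
    exact Fin.ext (r1.unique_right r2)
  funext i
  by_cases hi : (i : ℕ) < (f i : ℕ)
  · exact key i hi
  · have hlt : (f i : ℕ) < (i : ℕ) := (not_lt_iff hf.2.1).mp hi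
    have h2 : (f i : ℕ) < ((f (f i)) : ℕ) := by rw [hf.1 i]; exact hlt
    have h3 : f (f i) = g (f i) := key (f i) h2
    rw [hf.1 i] at h3
    have h4 : g (g (f i)) = g i := by rw [← h3]
    rw [hg.1] at h4
    exact h4

end LP

/-! ### From Dyck words to link patterns -/

lemma exists_rel_of_U {l : List DyckStep} (hlen : l.length = 2 * n)
    (hnn : ∀ m, 0 ≤ ht l m) (hend : ht l (2 * n) = 0)
    (i : Fin (2 * n)) (hU : l.get ⟨(i : ℕ), by omega⟩ = U) :
    ∃ j : Fin (2 * n), Rel l (i : ℕ) (j : ℕ) := by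
  have hstepi : ht l ((i : ℕ) + 1) = ht l (i : ℕ) + 1 := by
    rw [ht_succ l (i : ℕ) (by omega), if_pos hU]
  have hex : ∃ m, (i : ℕ) < m ∧ m ≤ 2 * n ∧ ht l m = ht l (i : ℕ) := by
    obtain ⟨m, hm1, hm2, hm3⟩ := ivt_down (ht l) (ht_succ_ge l)
      (a := (i : ℕ) + 1) (b := 2 * n) (v := ht l (i : ℕ))
      (by omega) (by rw [hend]; exact hnn _) (by omega)
    exact ⟨m, by omega, hm2, hm3⟩
  classical
  obtain ⟨h1, h2, h3⟩ := Nat.find_spec hex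
  have hne : Nat.find hex ≠ (i : ℕ) + 1 := by
    intro hcon
    rw [hcon] at h3
    omega
  have hgt : ∀ m, (i : ℕ) < m → m < Nat.find hex → ht l (i : ℕ) < ht l m := by
    intro m hm1 hm2
    by_contra hc
    push_neg at hc
    have hne' : ht l m ≠ ht l (i : ℕ) := fun hh => Nat.find_min hex hm2 ⟨hm1, by omega, hh⟩
    have hmi : m ≠ (i : ℕ) + 1 := by
      intro hcon
      rw [hcon] at hc
      omega
    obtain ⟨m', hm'1, hm'2, hm'3⟩ := ivt_down (ht l) (ht_succ_ge l)
      (a := (i : ℕ) + 1) (b := m) (v := ht l (i : ℕ)) (by omega) (by omega) (by omega)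
    exact Nat.find_min hex (by omega : m' < Nat.find hex) ⟨by omega, by omega, hm'3⟩
  refine ⟨⟨Nat.find hex - 1, by omega⟩, ⟨by simp; omega, ?_, ?_⟩⟩
  · show ht l ((Nat.find hex - 1) + 1) = ht l (i : ℕ)
    rw [show Nat.find hex - 1 + 1 = Nat.find hex by omega]
    exact h3
  · intro m hm1 hm2
    exact hgt m hm1 (by simp at hm2; omega)

lemma exists_rel_of_D {l : List DyckStep} (hlen : l.length = 2 * n)
    (hnn : ∀ m, 0 ≤ ht l m)
    (j : Fin (2 * n)) (hD : l.get ⟨(j : ℕ), by omega⟩ = D) :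
    ∃ i : Fin (2 * n), Rel l (i : ℕ) (j : ℕ) := by
  have hstepj : ht l ((j : ℕ) + 1) = ht l (j : ℕ) - 1 := by
    rw [ht_succ l (j : ℕ) (by omega), hD, if_neg (by simp)]
    ring
  have hv0 : (0:ℤ) ≤ ht l ((j : ℕ) + 1) := hnn _
  obtain ⟨mw, hmw0, hmw1, hmw2⟩ := ivt_up (ht l) (ht_succ_le l)
    (a := 0) (b := (j : ℕ)) (v := ht l ((j : ℕ) + 1))
    (Nat.zero_le _) (by rw [ht_zero]; omega) (by omega)
  classical
  have hspec : ht l (Nat.findGreatest (fun m => ht l m = ht l ((j : ℕ) + 1)) (j : ℕ))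
      = ht l ((j : ℕ) + 1) :=
    Nat.findGreatest_spec (P := fun m => ht l m = ht l ((j : ℕ) + 1)) (le_of_lt hmw1) hmw2
  have hle : Nat.findGreatest (fun m => ht l m = ht l ((j : ℕ) + 1)) (j : ℕ) ≤ (j : ℕ) :=
    Nat.findGreatest_le _
  have hKj : Nat.findGreatest (fun m => ht l m = ht l ((j : ℕ) + 1)) (j : ℕ) ≠ (j : ℕ) := by
    intro hcon
    rw [hcon] at hspec
    omega
  have hmax : ∀ m, Nat.findGreatest (fun m => ht l m = ht l ((j : ℕ) + 1)) (j : ℕ) < m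
      → m ≤ (j : ℕ) → ht l m ≠ ht l ((j : ℕ) + 1) :=
    fun m h1 h2 => Nat.findGreatest_is_greatest h1 h2
  have hgt : ∀ m, Nat.findGreatest (fun m => ht l m = ht l ((j : ℕ) + 1)) (j : ℕ) < m
      → m ≤ (j : ℕ) → ht l ((j : ℕ) + 1) < ht l m := by
    intro m h1 h2
    by_contra hc
    push_neg at hc
    have hne' := hmax m h1 h2
    have hmj : m ≠ (j : ℕ) := by
      intro hcon
      rw [hcon] at hc
      omega
    obtain ⟨m', h1', h2', h3'⟩ := ivt_up (ht l) (ht_succ_le l)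
      (a := m) (b := (j : ℕ)) (v := ht l ((j : ℕ) + 1)) (by omega) (by omega) (by omega)
    exact hmax m' (by omega) (by omega) h3'
  refine ⟨⟨Nat.findGreatest (fun m => ht l m = ht l ((j : ℕ) + 1)) (j : ℕ), by omega⟩,
    ⟨by simp; omega, ?_, ?_⟩⟩
  · show ht l ((j : ℕ) + 1) = ht l _
    exact hspec.symm
  · intro m hm1 hm2
    simp only at hm1 hm2
    rw [hspec]
    exact hgt m hm1 hm2

lemma exists_pattern (n : ℕ) (p : DyckWord) (hlen : p.toList.length = 2 * n) :
    ∃ f : Fin (2 * n) → Fin (2 * n), IsLinkPattern n f ∧ wordOf n f = p.toList := by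
  classical
  have hnn : ∀ m, 0 ≤ ht p.toList m := by
    intro m
    have := p.count_D_le_count_U m
    unfold ht
    omega
  have hend : ht p.toList (2 * n) = 0 := by
    unfold ht
    rw [← hlen, List.take_of_length_le le_rfl, p.count_U_eq_count_D]
    ring
  choose jf hjf using exists_rel_of_U (n := n) (l := p.toList) hlen hnn hend
  choose ifn hifn using exists_rel_of_D (n := n) (l := p.toList) hlen hnn
  set l := p.toList with hl
  set f : Fin (2 * n) → Fin (2 * n) := fun i =>
    if h : l.get ⟨(i : ℕ), by omega⟩ = U then jf i h
    else ifn i ((l.get ⟨(i : ℕ), by omega⟩).dichotomy.resolve_left h) with hf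
  have hopen : ∀ (i : Fin (2 * n)) (h : l.get ⟨(i : ℕ), by omega⟩ = U),
      Rel l (i : ℕ) ((f i : ℕ)) := by
    intro i h
    rw [hf]
    simp only [dif_pos h]
    exact hjf i h
  have hclose : ∀ (i : Fin (2 * n)) (h : l.get ⟨(i : ℕ), by omega⟩ = D),
      Rel l ((f i : ℕ)) (i : ℕ) := by
    intro i h
    rw [hf]
    have h' : ¬ l.get ⟨(i : ℕ), by omega⟩ = U := by rw [h]; simp
    simp only [dif_neg h']
    exact hifn i _
  have hinv : Function.Involutive f := by
    intro i
    rcases (l.get ⟨(i : ℕ), by omega⟩).dichotomy with h | h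
    · have r := hopen i h
      have hD : l.get ⟨((f i) : ℕ), by omega⟩ = D := r.get_D (by omega)
      have r2 := hclose (f i) hD
      exact Fin.ext (Rel.unique_left r2 r)
    · have r := hclose i h
      have hU : l.get ⟨((f i) : ℕ), by omega⟩ = U := r.get_U (by omega)
      have r2 := hopen (f i) hU
      exact Fin.ext (Rel.unique_right r2 r)
  have hfpf : ∀ i, f i ≠ i := by
    intro i hcon
    rcases (l.get ⟨(i : ℕ), by omega⟩).dichotomy with h | h
    · have r := hopen i h
      rw [hcon] at r
      exact lt_irrefl _ r.1
    · have r := hclose i h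
      rw [hcon] at r
      exact lt_irrefl _ r.1
  have hiopen : ∀ i : Fin (2 * n), (i : ℕ) < (f i : ℕ) → l.get ⟨(i : ℕ), by omega⟩ = U := by
    intro i hi
    rcases (l.get ⟨(i : ℕ), by omega⟩).dichotomy with h | h
    · exact h
    · exact absurd (hclose i h).1 (by omega)
  refine ⟨f, ⟨hinv, hfpf, ?_⟩, ?_⟩
  · rintro i j ⟨h1, h2, h3⟩
    have hiU := hiopen i (by omega)
    have hjU := hiopen j (by omega)
    have ri := hopen i hiU
    have rj := hopen j hjU
    have ha := ri.2.2 (j : ℕ) h1 (le_of_lt h2)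
    have hb := rj.2.2 ((f i : ℕ) + 1) (by omega) (by omega)
    rw [ri.2.1] at hb
    omega
  · apply List.ext_get
    · rw [length_wordOf, hlen]
    · intro k h1 h2
      have hk2n : k < 2 * n := by rw [length_wordOf] at h1; exact h1
      have hw : (wordOf n f).get ⟨k, h1⟩
          = if (k : ℕ) < ((f ⟨k, hk2n⟩ : Fin (2 * n)) : ℕ) then U else D := by
        have hthis := List.getElem_ofFn (f := fun i : Fin (2 * n) =>
          if (i : ℕ) < (f i : ℕ) then U else D) (i := k) (by simpa using hk2n)
        exact hthis
      rw [hw]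
      rcases (l.get ⟨k, h2⟩).dichotomy with h | h
      · have r := hopen ⟨k, hk2n⟩ h
        rw [if_pos r.1, h]
      · have r := hclose ⟨k, hk2n⟩ h
        have hr := r.1
        have hv : ((⟨k, hk2n⟩ : Fin (2 * n)) : ℕ) = k := rfl
        rw [hv] at hr
        rw [if_neg (by omega), h]

/-! ### Assembly -/

noncomputable def toDyck (n : ℕ) (x : {f : Fin (2 * n) → Fin (2 * n) // IsLinkPattern n f}) :
    {p : DyckWord // p.semilength = n} :=
  ⟨dyckOf x.2.1 x.2.2.1, count_U_wordOf x.2.1 x.2.2.1⟩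

lemma toDyck_bijective (n : ℕ) : Function.Bijective (toDyck n) := by
  constructor
  · rintro ⟨f, hf⟩ ⟨g, hg⟩ h
    have h2 : wordOf n f = wordOf n g := congrArg (fun y => (y.1 : DyckWord).toList) h
    exact Subtype.ext (wordOf_injective hf hg h2)
  · rintro ⟨p, hp⟩
    have hlen : p.toList.length = 2 * n := by
      rw [← p.two_mul_semilength_eq_length, hp]
    obtain ⟨f, hf, hw⟩ := exists_pattern n p hlen
    exact ⟨⟨f, hf⟩, Subtype.ext (DyckWord.ext hw)⟩

lemma card_lp (n : ℕ) :
    Nat.card {f : Fin (2 * n) → Fin (2 * n) // IsLinkPattern n f} = catalan n := by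
  rw [Nat.card_eq_of_bijective (toDyck n) (toDyck_bijective n), Nat.card_eq_fintype_card,
    DyckWord.card_dyckWord_semilength_eq_catalan]

def equivSigma (n : ℕ) :
    {p : (Fin (2 * n) → Fin (2 * n)) × Option (Fin (2 * n)) // IsPuncturedLinkPattern n p}
      ≃ Σ f : {f : Fin (2 * n) → Fin (2 * n) // IsLinkPattern n f},
          Option {i : Fin (2 * n) // (i : ℕ) < (f.1 i : ℕ)} where
  toFun x := ⟨⟨x.1.1, x.2.1⟩,
    Option.pmap Subtype.mk x.1.2 fun i hi => x.2.2 i (Option.mem_def.mp hi)⟩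
  invFun y := ⟨(y.1.1, y.2.map Subtype.val), y.1.2, fun i hi => by
    rcases hy : y.2 with _ | i'
    · rw [hy] at hi; exact absurd hi (by simp)
    · rw [hy] at hi
      simp only [Option.map_some] at hi
      have hii : (i' : Fin (2 * n)) = i := Option.some_injective _ hi
      rw [← hii]
      exact i'.2⟩
  left_inv x := by
    rcases x with ⟨⟨f, o⟩, h⟩
    rcases o with _ | i <;> rfl
  right_inv y := by
    rcases y with ⟨⟨f, hf⟩, o⟩
    rcases o with _ | ⟨i, hi⟩ <;> rfl

noncomputable def equivProd (n : ℕ) :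
    (Σ f : {f : Fin (2 * n) → Fin (2 * n) // IsLinkPattern n f},
        Option {i : Fin (2 * n) // (i : ℕ) < (f.1 i : ℕ)})
      ≃ {f : Fin (2 * n) → Fin (2 * n) // IsLinkPattern n f} × Option (Fin n) :=
  (Equiv.sigmaCongrRight fun f => Equiv.optionCongr
    (Fintype.equivFinOfCardEq (by
      rw [Fintype.card_subtype]
      exact card_openers f.2.1 f.2.2.1))).trans
    (Equiv.sigmaEquivProd _ _)

end PLPaux

/-- The number of punctured link patterns on `2n` points equals `(n+1) · Catalan n`. -/
theorem card_puncturedLinkPatterns (n : ℕ) :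
    Nat.card {p : (Fin (2 * n) → Fin (2 * n)) × Option (Fin (2 * n)) //
        IsPuncturedLinkPattern n p} = (n + 1) * catalan n := by
  rw [Nat.card_congr ((PLPaux.equivSigma n).trans (PLPaux.equivProd n))]
  rw [Nat.card_prod, PLPaux.card_lp]
  rw [Nat.card_eq_fintype_card, Fintype.card_option, Fintype.card_fin]
  ring
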